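/- For any real m×n matrix X and any matrix G of the form G = U·sign(Σ)·Vᵀ where X = UΣVᵀ is a compact SVD, G is a subgradient of the nuclear norm at X: for all Y, ‖Y‖_* ≥ ‖X‖_* + ⟨G, Y − X⟩. -/

import Mathlib

open Matrix

/-- Frobenius inner product. -/
noncomputable def frobInner {m n : ℕ} (A B : Matrix (Fin m) (Fin n) ℝ) : ℝ :=
  ∑ i, ∑ j, A i j * B i j

/-- Nuclear norm: sum of the singular values of `A`. -/
noncomputable def nuclearNorm {m n : ℕ} (A : Matrix (Fin m) (Fin n) ℝ) : ℝ :=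
  ∑ i, Real.sqrt ((Matrix.isHermitian_conjTranspose_mul_self A).eigenvalues i)

lemma dot_mul_dot {m n : ℕ} (A : Matrix (Fin m) (Fin n) ℝ) (w v : Fin n → ℝ) :
    ∑ i, (∑ j, A i j * w j) * (∑ j, A i j * v j)
      = ∑ l, ∑ p, (Aᵀ * A) l p * (w l * v p) := by
  have h1 : ∀ i : Fin m, (∑ j, A i j * w j) * (∑ j, A i j * v j)
      = ∑ l, ∑ p, A i l * w l * (A i p * v p) := fun i => Finset.sum_mul_sum _ _ _ _
  rw [Finset.sum_congr rfl fun i _ => h1 i, Finset.sum_comm]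
  refine Finset.sum_congr rfl fun l _ => ?_
  rw [Finset.sum_comm]
  simp only [Matrix.mul_apply, transpose_apply, Finset.sum_mul]
  refine Finset.sum_congr rfl fun p _ => Finset.sum_congr rfl fun i _ => by ring

lemma frob_eq_trace {m n : ℕ} (A B : Matrix (Fin m) (Fin n) ℝ) :
    frobInner A B = (Aᵀ * B).trace := by
  unfold frobInner
  rw [Finset.sum_comm]
  simp only [trace, diag, Matrix.mul_apply, transpose_apply]

lemma vdv_apply {n p : ℕ} (V : Matrix (Fin n) (Fin p) ℝ) (d : Fin p → ℝ) (a b : Fin n) :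
    (V * diagonal d * Vᵀ) a b = ∑ k, d k * (V a k * V b k) := by
  simp only [Matrix.mul_apply, Matrix.diagonal_apply, transpose_apply, mul_ite, ite_mul,
    mul_zero, zero_mul, Finset.sum_ite_eq, Finset.sum_ite_eq', Finset.mem_univ, if_true]
  refine Finset.sum_congr rfl fun k _ => by ring

lemma bessel {N p : ℕ} (d : Fin N → Fin p → ℝ)
    (horth : ∀ j l, j ≠ l → ∑ k, d j k * d l k = 0)
    (hnorm : ∀ j, ∑ k, d j k ^ 2 ≤ 1)
    (v : Fin p → ℝ) :
    ∑ j, (∑ k, v k * d j k) ^ 2 ≤ ∑ k, v k ^ 2 := by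
  set c : Fin N → ℝ := fun j => ∑ k, v k * d j k with hc
  have hE : 0 ≤ ∑ k, (v k - ∑ j, c j * d j k) ^ 2 :=
    Finset.sum_nonneg fun _ _ => sq_nonneg _
  have hmid : ∑ k, v k * ∑ j, c j * d j k = ∑ j, c j ^ 2 := by
    simp only [Finset.mul_sum]
    rw [Finset.sum_comm]
    refine Finset.sum_congr rfl fun j _ => ?_
    have : ∑ k, v k * (c j * d j k) = c j * ∑ k, v k * d j k := by
      rw [Finset.mul_sum]; exact Finset.sum_congr rfl fun k _ => by ring
    rw [this]
    show c j * c j = c j ^ 2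
    ring
  have hlast : ∑ k, (∑ j, c j * d j k) ^ 2
      = ∑ j, ∑ l, (c j * c l) * ∑ k, d j k * d l k := by
    have h2 : ∀ k : Fin p, (∑ j, c j * d j k) ^ 2
        = ∑ j, ∑ l, c j * d j k * (c l * d l k) := by
      intro k; rw [sq]; exact Finset.sum_mul_sum _ _ _ _
    rw [Finset.sum_congr rfl fun k _ => h2 k, Finset.sum_comm]
    refine Finset.sum_congr rfl fun j _ => ?_
    rw [Finset.sum_comm]
    refine Finset.sum_congr rfl fun l _ => ?_
    rw [Finset.mul_sum]
    exact Finset.sum_congr rfl fun k _ => by ring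
  have hlast_le : ∑ j, ∑ l, (c j * c l) * ∑ k, d j k * d l k ≤ ∑ j, c j ^ 2 := by
    refine Finset.sum_le_sum fun j _ => ?_
    have hdiag : ∑ l, (c j * c l) * ∑ k, d j k * d l k
        = (c j * c j) * ∑ k, d j k * d j k := by
      refine Finset.sum_eq_single j (fun l _ hlj => ?_) (by simp)
      rw [horth j l (Ne.symm hlj)]; ring
    rw [hdiag]
    have : ∑ k, d j k * d j k = ∑ k, d j k ^ 2 := by
      exact Finset.sum_congr rfl fun k _ => (sq (d j k)).symm ▸ by ring
    rw [this]
    have h3 := hnorm j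
    nlinarith [sq_nonneg (c j)]
  have hexp : ∑ k, (v k - ∑ j, c j * d j k) ^ 2
      = ∑ k, v k ^ 2 - 2 * (∑ k, v k * ∑ j, c j * d j k)
        + ∑ k, (∑ j, c j * d j k) ^ 2 := by
    have e1 : ∀ k : Fin p, (v k - ∑ j, c j * d j k) ^ 2
        = v k ^ 2 - 2 * (v k * ∑ j, c j * d j k) + (∑ j, c j * d j k) ^ 2 :=
      fun k => by ring
    rw [Finset.sum_congr rfl fun k _ => e1 k, Finset.sum_add_distrib,
      Finset.sum_sub_distrib, ← Finset.mul_sum]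
  have : ∑ j, c j ^ 2 ≤ ∑ k, v k ^ 2 := by
    rw [hexp, hmid, hlast] at hE
    linarith
  exact this


lemma tmul {m n p : ℕ} (U : Matrix (Fin m) (Fin p) ℝ) (V : Matrix (Fin n) (Fin p) ℝ)
    (a b : Fin p → ℝ) (hU : Uᵀ * U = 1) :
    (U * diagonal a * Vᵀ)ᵀ * (U * diagonal b * Vᵀ)
      = V * diagonal (fun k => a k * b k) * Vᵀ := by
  rw [transpose_mul, transpose_mul, transpose_transpose, diagonal_transpose]
  simp only [Matrix.mul_assoc]
  rw [← Matrix.mul_assoc Uᵀ U, hU, Matrix.one_mul, ← Matrix.mul_assoc (diagonal a),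
    diagonal_mul_diagonal]

lemma frob_le_nuclear {m n : ℕ} (G A : Matrix (Fin m) (Fin n) ℝ)
    (hG : ∀ w : Fin n → ℝ, ∑ i, (∑ j, G i j * w j) ^ 2 ≤ ∑ j, w j ^ 2) :
    frobInner G A ≤ nuclearNorm A := by
  set hA := Matrix.isHermitian_conjTranspose_mul_self A with hhA
  set W : Matrix (Fin n) (Fin n) ℝ := (hA.eigenvectorUnitary : Matrix (Fin n) (Fin n) ℝ) with hW
  set lam := hA.eigenvalues with hlam
  have hWstar : star W = Wᵀ := by
    rw [star_eq_conjTranspose, conjTranspose_eq_transpose_of_trivial]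
  have hWWT : W * Wᵀ = 1 := by rw [← hWstar]; exact hA.eigenvectorUnitary.prop.2
  have hcol : ∀ j l, ∑ k, W k j * W k l = if j = l then 1 else 0 := by
    intro j l
    have h : Wᵀ * W = 1 := by rw [← hWstar]; exact hA.eigenvectorUnitary.prop.1
    have := congrFun (congrFun h j) l
    simpa [Matrix.mul_apply, Matrix.one_apply] using this
  have heig : ∀ j p, ∑ q, (Aᵀ * A) p q * W q j = lam j * W p j := by
    intro j p
    have h := congrFun (hA.mulVec_eigenvectorBasis j) p
    simp [mulVec, dotProduct, hW, Matrix.IsHermitian.eigenvectorUnitary_apply] at h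
    exact h
  have hlamnn : ∀ j, 0 ≤ lam j := by
    intro j
    have h : (Aᵀ * A).PosSemidef := by
      have := Matrix.posSemidef_conjTranspose_mul_self A
      simpa [conjTranspose_eq_transpose_of_trivial] using this
    exact h.eigenvalues_nonneg j
  -- step 1 : frobInner G A = ∑ j, ∑ i, (A*W) i j * (G*W) i j
  have step1 : frobInner G A = ∑ j, ∑ i, (A * W) i j * (G * W) i j := by
    have e1 : frobInner G A = frobInner (G * W) (A * W) := by
      rw [frob_eq_trace, frob_eq_trace, transpose_mul]
      calc (Gᵀ * A).trace = (Gᵀ * A * (W * Wᵀ)).trace := by rw [hWWT, mul_one]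
        _ = ((Gᵀ * A * W) * Wᵀ).trace := by rw [mul_assoc]
        _ = (Wᵀ * (Gᵀ * A * W)).trace := (trace_mul_comm _ _).symm
        _ = (Wᵀ * Gᵀ * (A * W)).trace := by rw [Matrix.mul_assoc Wᵀ Gᵀ (A * W), Matrix.mul_assoc Gᵀ A W]
    rw [e1]
    unfold frobInner
    rw [Finset.sum_comm]
    exact Finset.sum_congr rfl fun j _ => Finset.sum_congr rfl fun i _ => by ring
  -- step 2 : column norms
  have step2 : ∀ j, ∑ i, (A * W) i j ^ 2 = lam j := by
    intro j
    have e1 : ∑ i, (A * W) i j ^ 2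
        = ∑ i, (∑ l, A i l * W l j) * (∑ l, A i l * W l j) := by
      refine Finset.sum_congr rfl fun i _ => ?_
      rw [Matrix.mul_apply, sq]
    rw [e1, dot_mul_dot A (fun k => W k j) (fun k => W k j)]
    have e2 : ∀ l : Fin n, ∑ p, (Aᵀ * A) l p * (W l j * W p j)
        = W l j * (lam j * W l j) := by
      intro l
      have : ∑ p, (Aᵀ * A) l p * (W l j * W p j)
          = W l j * ∑ p, (Aᵀ * A) l p * W p j := by
        rw [Finset.mul_sum]; exact Finset.sum_congr rfl fun p _ => by ring
      rw [this, heig j l]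
    rw [Finset.sum_congr rfl fun l _ => e2 l]
    have : ∑ l, W l j * (lam j * W l j) = lam j * ∑ l, W l j * W l j := by
      rw [Finset.mul_sum]; exact Finset.sum_congr rfl fun l _ => by ring
    rw [this, hcol j j, if_pos rfl, mul_one]
  -- step 3 : each column of G*W has norm ≤ 1
  have step3 : ∀ j, ∑ i, (G * W) i j ^ 2 ≤ 1 := by
    intro j
    have e1 : ∑ i, (G * W) i j ^ 2 = ∑ i, (∑ k, G i k * W k j) ^ 2 := by
      refine Finset.sum_congr rfl fun i _ => by rw [Matrix.mul_apply]
    rw [e1]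
    calc ∑ i, (∑ k, G i k * W k j) ^ 2 ≤ ∑ k, W k j ^ 2 := hG _
      _ = ∑ k, W k j * W k j := Finset.sum_congr rfl fun k _ => sq (W k j)
      _ = 1 := by rw [hcol j j, if_pos rfl]
  -- combine
  rw [step1]
  have : nuclearNorm A = ∑ j, Real.sqrt (lam j) := rfl
  rw [this]
  refine Finset.sum_le_sum fun j _ => ?_
  calc ∑ i, (A * W) i j * (G * W) i j
      ≤ Real.sqrt (∑ i, (A * W) i j ^ 2) * Real.sqrt (∑ i, (G * W) i j ^ 2) :=
        Real.sum_mul_le_sqrt_mul_sqrt _ _ _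
    _ ≤ Real.sqrt (lam j) * 1 := by
        rw [step2 j]
        have h1 : Real.sqrt (∑ i, (G * W) i j ^ 2) ≤ 1 := by
          rw [show (1:ℝ) = Real.sqrt 1 by simp]
          exact Real.sqrt_le_sqrt (by simpa using step3 j)
        exact mul_le_mul_of_nonneg_left h1 (Real.sqrt_nonneg _)
    _ = Real.sqrt (lam j) := mul_one _


lemma nuclear_le {m n : ℕ}
    (X : Matrix (Fin m) (Fin n) ℝ)
    (U : Matrix (Fin m) (Fin (min m n)) ℝ)
    (V : Matrix (Fin n) (Fin (min m n)) ℝ)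
    (σ : Fin (min m n) → ℝ)
    (hU : Uᵀ * U = 1) (hV : Vᵀ * V = 1)
    (hσ : ∀ i, 0 ≤ σ i)
    (hX : X = U * Matrix.diagonal σ * Vᵀ) :
    nuclearNorm X ≤ ∑ k, σ k := by
  set hA := Matrix.isHermitian_conjTranspose_mul_self X with hhA
  set W : Matrix (Fin n) (Fin n) ℝ := (hA.eigenvectorUnitary : Matrix (Fin n) (Fin n) ℝ) with hW
  set lam := hA.eigenvalues with hlam
  have hWstar : star W = Wᵀ := by
    rw [star_eq_conjTranspose, conjTranspose_eq_transpose_of_trivial]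
  have hWWT : W * Wᵀ = 1 := by rw [← hWstar]; exact hA.eigenvectorUnitary.prop.2
  have hcol : ∀ j l, ∑ k, W k j * W k l = if j = l then 1 else 0 := by
    intro j l
    have h : Wᵀ * W = 1 := by rw [← hWstar]; exact hA.eigenvectorUnitary.prop.1
    have := congrFun (congrFun h j) l
    simpa [Matrix.mul_apply, Matrix.one_apply] using this
  have heig : ∀ j q0, ∑ q, (Xᵀ * X) q0 q * W q j = lam j * W q0 j := by
    intro j q0
    have h := congrFun (hA.mulVec_eigenvectorBasis j) q0
    simp [mulVec, dotProduct, hW, Matrix.IsHermitian.eigenvectorUnitary_apply] at h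
    exact h
  have hlamnn : ∀ j, 0 ≤ lam j := by
    intro j
    have h : (Xᵀ * X).PosSemidef := by
      have := Matrix.posSemidef_conjTranspose_mul_self X
      simpa [conjTranspose_eq_transpose_of_trivial] using this
    exact h.eigenvalues_nonneg j
  have hVcol : ∀ k k', ∑ q, V q k * V q k' = if k = k' then 1 else 0 := by
    intro k k'
    have := congrFun (congrFun hV k) k'
    simpa [Matrix.mul_apply, Matrix.one_apply] using this
  have hXX : Xᵀ * X = V * diagonal (fun k => σ k * σ k) * Vᵀ := by
    rw [hX]; exact tmul U V σ σ hU
  set c : Fin n → Fin (min m n) → ℝ := fun j k => ∑ q, V q k * W q j with hc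
  -- key : ∑_k σ_k² c_jk c_lk = lam l * δ_jl
  have key : ∀ j l, ∑ k, σ k * σ k * (c j k * c l k)
      = lam l * (if j = l then 1 else 0) := by
    intro j l
    have e1 : ∑ q0, W q0 j * (∑ q, (Xᵀ * X) q0 q * W q l)
        = lam l * (if j = l then 1 else 0) := by
      have : ∀ q0, W q0 j * (∑ q, (Xᵀ * X) q0 q * W q l)
          = lam l * (W q0 j * W q0 l) := by
        intro q0; rw [heig l q0]; ring
      rw [Finset.sum_congr rfl fun q0 _ => this q0, ← Finset.mul_sum, hcol j l]
    have e2 : ∑ q0, W q0 j * (∑ q, (Xᵀ * X) q0 q * W q l)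
        = ∑ k, σ k * σ k * (c j k * c l k) := by
      have e3 : ∀ q0, W q0 j * (∑ q, (Xᵀ * X) q0 q * W q l)
          = ∑ k, ∑ q, W q0 j * (σ k * σ k * (V q0 k * V q k)) * W q l := by
        intro q0
        rw [Finset.mul_sum]
        have e4 : ∀ q, W q0 j * ((Xᵀ * X) q0 q * W q l)
            = ∑ k, W q0 j * (σ k * σ k * (V q0 k * V q k)) * W q l := by
          intro q
          rw [hXX, vdv_apply, Finset.sum_mul, Finset.mul_sum]
          refine Finset.sum_congr rfl fun k _ => by ring
        rw [Finset.sum_congr rfl fun q _ => e4 q, Finset.sum_comm]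
      rw [Finset.sum_congr rfl fun q0 _ => e3 q0, Finset.sum_comm]
      refine Finset.sum_congr rfl fun k _ => ?_
      have e5 : ∀ q0, ∑ q, W q0 j * (σ k * σ k * (V q0 k * V q k)) * W q l
          = (σ k * σ k) * ((V q0 k * W q0 j) * ∑ q, V q k * W q l) := by
        intro q0
        rw [Finset.mul_sum, Finset.mul_sum]
        refine Finset.sum_congr rfl fun q _ => by ring
      rw [Finset.sum_congr rfl fun q0 _ => e5 q0, ← Finset.mul_sum, ← Finset.sum_mul]
    rw [← e2, e1]
  -- row sums of c
  have hrowC : ∀ k, ∑ j, c j k * c j k = 1 := by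
    intro k
    have e1 : ∑ j, c j k * c j k
        = ∑ j, (∑ q, Wᵀ j q * V q k) * (∑ q, Wᵀ j q * V q k) := by
      refine Finset.sum_congr rfl fun j _ => ?_
      have : c j k = ∑ q, Wᵀ j q * V q k :=
        Finset.sum_congr rfl fun q _ => by rw [transpose_apply]; ring
      rw [this]
    rw [e1, dot_mul_dot Wᵀ (fun q => V q k) (fun q => V q k)]
    have e2 : ∀ l p : Fin n, (Wᵀᵀ * Wᵀ) l p = (1 : Matrix (Fin n) (Fin n) ℝ) l p := by
      intro l p; rw [transpose_transpose, hWWT]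
    calc ∑ l, ∑ p, (Wᵀᵀ * Wᵀ) l p * (V l k * V p k)
        = ∑ l, ∑ p, (1 : Matrix (Fin n) (Fin n) ℝ) l p * (V l k * V p k) :=
          Finset.sum_congr rfl fun l _ => Finset.sum_congr rfl fun p _ => by rw [e2]
      _ = ∑ l, V l k * V l k := by
          refine Finset.sum_congr rfl fun l _ => ?_
          simp [Matrix.one_apply, ite_mul]
      _ = 1 := by rw [hVcol k k, if_pos rfl]
  -- lam j = ∑_k (σ_k c_jk)^2
  have hlameq : ∀ j, lam j = ∑ k, (σ k * c j k) ^ 2 := by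
    intro j
    have := key j j
    rw [if_pos rfl, mul_one] at this
    rw [← this]
    refine Finset.sum_congr rfl fun k _ => by ring
  set nrm : Fin n → ℝ := fun j => Real.sqrt (lam j) with hnrm
  set d : Fin n → Fin (min m n) → ℝ :=
    fun j k => if nrm j = 0 then 0 else σ k * c j k / nrm j with hd
  have hnrm_sq : ∀ j, nrm j * nrm j = lam j := fun j => Real.mul_self_sqrt (hlamnn j)
  have hd_orth : ∀ j l, j ≠ l → ∑ k, d j k * d l k = 0 := by
    intro j l hjl
    by_cases h1 : nrm j = 0
    · simp [hd, h1]
    by_cases h2 : nrm l = 0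
    · simp [hd, h2]
    have e1 : ∀ k, d j k * d l k = (σ k * σ k * (c j k * c l k)) / (nrm j * nrm l) := by
      intro k; simp only [hd, if_neg h1, if_neg h2]; field_simp
    rw [Finset.sum_congr rfl fun k _ => e1 k, ← Finset.sum_div, key j l, if_neg hjl,
      mul_zero, zero_div]
  have hd_norm : ∀ j, ∑ k, d j k ^ 2 ≤ 1 := by
    intro j
    by_cases h1 : nrm j = 0
    · simp [hd, h1]
    have e1 : ∀ k, d j k ^ 2 = (σ k * c j k) ^ 2 / (nrm j * nrm j) := by
      intro k; simp only [hd, if_neg h1]; rw [div_pow, pow_two (nrm j)]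
    rw [Finset.sum_congr rfl fun k _ => e1 k, ← Finset.sum_div, ← hlameq j, hnrm_sq j,
      div_self]
    · rw [← hnrm_sq j]; exact mul_ne_zero h1 h1
  have hrecover : ∀ j, ∑ k, d j k * (σ k * c j k) = nrm j := by
    intro j
    by_cases h1 : nrm j = 0
    · simp only [hd, if_pos h1, zero_mul, Finset.sum_const_zero]
      rw [h1]
    have e1 : ∀ k, d j k * (σ k * c j k) = (σ k * c j k) ^ 2 / nrm j := by
      intro k; simp only [hd, if_neg h1]
      rw [div_mul_eq_mul_div, ← pow_two]
    rw [Finset.sum_congr rfl fun k _ => e1 k, ← Finset.sum_div, ← hlameq j, ← hnrm_sq j,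
      mul_div_assoc, div_self h1, mul_one]
  -- Bessel for rows of d
  have hbess : ∀ k, ∑ j, d j k ^ 2 ≤ 1 := by
    intro k
    have h := bessel d hd_orth hd_norm (fun p => if p = k then (1 : ℝ) else 0)
    simp only [ite_mul, one_mul, zero_mul, Finset.sum_ite_eq', Finset.mem_univ,
      if_true] at h
    calc ∑ j, d j k ^ 2 ≤ ∑ p, (if p = k then (1:ℝ) else 0) ^ 2 := h
      _ = 1 := by simp
  -- conclude
  have final : nuclearNorm X = ∑ j, nrm j := rfl
  rw [final]
  calc ∑ j, nrm j = ∑ j, ∑ k, d j k * (σ k * c j k) :=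
        Finset.sum_congr rfl fun j _ => (hrecover j).symm
    _ = ∑ k, σ k * ∑ j, d j k * c j k := by
        rw [Finset.sum_comm]
        refine Finset.sum_congr rfl fun k _ => ?_
        rw [Finset.mul_sum]
        refine Finset.sum_congr rfl fun j _ => by ring
    _ ≤ ∑ k, σ k := by
        refine Finset.sum_le_sum fun k _ => ?_
        have h1 : ∑ j, d j k * c j k ≤ 1 := by
          calc ∑ j, d j k * c j k
              ≤ Real.sqrt (∑ j, d j k ^ 2) * Real.sqrt (∑ j, c j k ^ 2) :=
                Real.sum_mul_le_sqrt_mul_sqrt _ _ _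
            _ ≤ 1 * 1 := by
                apply mul_le_mul
                · rw [show (1:ℝ) = Real.sqrt 1 by simp]
                  exact Real.sqrt_le_sqrt (hbess k)
                · rw [show (1:ℝ) = Real.sqrt 1 by simp]
                  apply Real.sqrt_le_sqrt
                  rw [show ∑ j, c j k ^ 2 = ∑ j, c j k * c j k from
                    Finset.sum_congr rfl fun j _ => sq (c j k)]
                  rw [hrowC k]
                · exact Real.sqrt_nonneg _
                · norm_num
            _ = 1 := by norm_num
        calc σ k * ∑ j, d j k * c j k ≤ σ k * 1 :=
              mul_le_mul_of_nonneg_left h1 (hσ k)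
          _ = σ k := mul_one _

lemma shuffle {n p : ℕ} (V : Matrix (Fin n) (Fin p) ℝ) (d : Fin p → ℝ) (w v : Fin n → ℝ) :
    ∑ l, ∑ q, (V * diagonal d * Vᵀ) l q * (w l * v q)
      = ∑ k, d k * ((∑ l, V l k * w l) * (∑ q, V q k * v q)) := by
  calc ∑ l, ∑ q, (V * diagonal d * Vᵀ) l q * (w l * v q)
      = ∑ l, ∑ k, ∑ q, d k * (V l k * w l) * (V q k * v q) := by
        refine Finset.sum_congr rfl fun l _ => ?_
        rw [show ∑ q, (V * diagonal d * Vᵀ) l q * (w l * v q)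
            = ∑ q, ∑ k, d k * (V l k * w l) * (V q k * v q) from
          Finset.sum_congr rfl fun q _ => by
            rw [vdv_apply, Finset.sum_mul]
            exact Finset.sum_congr rfl fun k _ => by ring, Finset.sum_comm]
    _ = ∑ k, ∑ l, ∑ q, d k * (V l k * w l) * (V q k * v q) := Finset.sum_comm
    _ = ∑ k, d k * ((∑ l, V l k * w l) * (∑ q, V q k * v q)) := by
        refine Finset.sum_congr rfl fun k _ => ?_
        rw [Finset.sum_congr rfl fun l (_ : l ∈ Finset.univ) =>
          (Finset.mul_sum _ _ _).symm, ← Finset.sum_mul, ← Finset.mul_sum, mul_assoc]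

/-- For a compact SVD `X = U Σ Vᵀ`, the matrix `G = U·sign(Σ)·Vᵀ` is a subgradient
of the nuclear norm at `X`. -/
theorem nuclearNorm_subgradient (m n : ℕ)
    (X : Matrix (Fin m) (Fin n) ℝ)
    (U : Matrix (Fin m) (Fin (min m n)) ℝ)
    (V : Matrix (Fin n) (Fin (min m n)) ℝ)
    (σ : Fin (min m n) → ℝ)
    (hU : Uᵀ * U = 1) (hV : Vᵀ * V = 1)
    (hσ : ∀ i, 0 ≤ σ i)
    (hX : X = U * Matrix.diagonal σ * Vᵀ) :
    ∀ Y : Matrix (Fin m) (Fin n) ℝ,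
      nuclearNorm Y ≥ nuclearNorm X +
        frobInner (U * Matrix.diagonal (fun i => if 0 < σ i then (1 : ℝ) else 0) * Vᵀ)
          (Y - X) := by
  intro Y
  set s : Fin (min m n) → ℝ := fun i => if 0 < σ i then (1 : ℝ) else 0 with hs
  set G : Matrix (Fin m) (Fin n) ℝ := U * Matrix.diagonal s * Vᵀ with hG
  have hVcol : ∀ k k', ∑ q, V q k * V q k' = if k = k' then 1 else 0 := by
    intro k k'
    have := congrFun (congrFun hV k) k'
    simpa [Matrix.mul_apply, Matrix.one_apply] using this
  have hPP : (V * Vᵀ)ᵀ * (V * Vᵀ) = V * Vᵀ := by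
    rw [transpose_mul, transpose_transpose, Matrix.mul_assoc,
      ← Matrix.mul_assoc Vᵀ V Vᵀ, hV, Matrix.one_mul]
  -- operator norm of G is at most 1
  have hGbound : ∀ w : Fin n → ℝ, ∑ i, (∑ j, G i j * w j) ^ 2 ≤ ∑ j, w j ^ 2 := by
    intro w
    have hGG : Gᵀ * G = V * diagonal (fun k => s k * s k) * Vᵀ := tmul U V s s hU
    have e1 : ∑ i, (∑ j, G i j * w j) ^ 2
        = ∑ k, s k * s k * ((∑ l, V l k * w l) * (∑ q, V q k * w q)) := by
      rw [Finset.sum_congr rfl fun i (_ : i ∈ Finset.univ) =>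
        sq ((∑ j, G i j * w j)), dot_mul_dot G w w, hGG, shuffle]
    set t : ℝ := ∑ l, ∑ q, (V * Vᵀ) l q * (w l * w q) with ht
    have e2 : ∑ k, (∑ l, V l k * w l) * (∑ q, V q k * w q) = t := by
      have := dot_mul_dot Vᵀ w w
      simp only [transpose_apply, transpose_transpose] at this
      rw [ht, ← this]
    have htnn : 0 ≤ t := by
      rw [← e2]
      exact Finset.sum_nonneg fun k _ => mul_self_nonneg _
    have e3 : ∑ k, s k * s k * ((∑ l, V l k * w l) * (∑ q, V q k * w q)) ≤ t := by
      rw [← e2]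
      refine Finset.sum_le_sum fun k _ => ?_
      have h1 : 0 ≤ (∑ l, V l k * w l) * (∑ q, V q k * w q) := by
        have : (∑ q, V q k * w q) = (∑ l, V l k * w l) := rfl
        rw [this]; exact mul_self_nonneg _
      by_cases h2 : 0 < σ k
      · simp [hs, h2]
      · simp [hs, h2, h1]
    -- projection bound : t ≤ ∑ w²
    have e4 : t ≤ ∑ j, w j ^ 2 := by
      set x : Fin n → ℝ := fun l => ∑ q, (V * Vᵀ) l q * w q with hx
      have e5 : t = ∑ l, w l * x l := by
        rw [ht]
        refine Finset.sum_congr rfl fun l _ => ?_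
        rw [hx, Finset.mul_sum]
        exact Finset.sum_congr rfl fun q _ => by ring
      have e6 : ∑ l, x l * x l = t := by
        have := dot_mul_dot (V * Vᵀ) w w
        rw [hPP] at this
        rw [← ht] at this
        rw [← this]
      have e7 : t ≤ Real.sqrt (∑ l, w l ^ 2) * Real.sqrt t := by
        calc t = ∑ l, w l * x l := e5
          _ ≤ Real.sqrt (∑ l, w l ^ 2) * Real.sqrt (∑ l, x l ^ 2) :=
            Real.sum_mul_le_sqrt_mul_sqrt _ _ _
          _ = Real.sqrt (∑ l, w l ^ 2) * Real.sqrt t := by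
            rw [show ∑ l, x l ^ 2 = ∑ l, x l * x l from
              Finset.sum_congr rfl fun l _ => sq (x l), e6]
      have hw2 : 0 ≤ ∑ l, w l ^ 2 := Finset.sum_nonneg fun l _ => sq_nonneg _
      nlinarith [Real.sq_sqrt htnn, Real.sq_sqrt hw2, Real.sqrt_nonneg t,
        Real.sqrt_nonneg (∑ l, w l ^ 2)]
    calc ∑ i, (∑ j, G i j * w j) ^ 2
        = ∑ k, s k * s k * ((∑ l, V l k * w l) * (∑ q, V q k * w q)) := e1
      _ ≤ t := e3
      _ ≤ ∑ j, w j ^ 2 := e4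
  -- ⟨G, X⟩ = ∑ σ
  have hGX : frobInner G X = ∑ k, σ k := by
    rw [frob_eq_trace, hG, hX, tmul U V s σ hU,
      Matrix.trace_mul_comm (V * diagonal fun k => s k * σ k) Vᵀ,
      ← Matrix.mul_assoc, hV, Matrix.one_mul, Matrix.trace_diagonal]
    refine Finset.sum_congr rfl fun k _ => ?_
    by_cases h2 : 0 < σ k
    · simp [hs, h2]
    · have : σ k = 0 := le_antisymm (not_lt.mp h2) (hσ k)
      simp [hs, h2, this]
  have hsub : frobInner G (Y - X) = frobInner G Y - frobInner G X := by
    simp [frobInner, Matrix.sub_apply, mul_sub, Finset.sum_sub_distrib]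
  have h1 : frobInner G Y ≤ nuclearNorm Y := frob_le_nuclear G Y hGbound
  have h2 : nuclearNorm X ≤ ∑ k, σ k := nuclear_le X U V σ hU hV hσ hX
  rw [ge_iff_le, hsub, hGX]
  linarith
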